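/- Let A, B be real numbers with e^A < 1. Then the family indexed by finitely supported sequences n = (n_k)_{k≥1} of nonnegative integers with terms ∏_{k≥1} e^{(kA+B)·n_k}/(n_k!) is summable, and Σ_n e^{A·E(n) + B·N(n)}/(n_1! n_2! ⋯) = exp( e^{A+B}/(1 − e^A) ), where E(n) = Σ_k k·n_k and N(n) = Σ_k n_k. -/

import Mathlib

open Filter

namespace PartitionSumAux

open Finset

/-- The ENNReal weight of a finsupp. -/
noncomputable def G (y : ℕ → ENNReal) (f : ℕ →₀ ℕ) : ENNReal :=
  ∏ k ∈ f.support, y k ^ f k / (Nat.factorial (f k) : ENNReal)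

lemma exp_tsum {r : ℝ} (hr : 0 ≤ r) :
    ∑' m : ℕ, ENNReal.ofReal r ^ m / (Nat.factorial m : ENNReal) =
      ENNReal.ofReal (Real.exp r) := by
  have h1 : ∀ m : ℕ, ENNReal.ofReal r ^ m / (Nat.factorial m : ENNReal) =
      ENNReal.ofReal (r ^ m / Nat.factorial m) := by
    intro m
    rw [ENNReal.ofReal_div_of_pos (by positivity), ENNReal.ofReal_pow hr,
      ENNReal.ofReal_natCast]
  simp_rw [h1]
  rw [← ENNReal.ofReal_tsum_of_nonneg (fun m => by positivity)
    (Real.summable_pow_div_factorial r)]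
  congr 1
  rw [Real.exp_eq_exp_ℝ, NormedSpace.exp_eq_tsum_div]

/-- Fubini for finite pi types in `ENNReal`. -/
lemma tsum_pi_fin : ∀ (N : ℕ) (x : Fin N → ENNReal),
    ∑' g : Fin N → ℕ, ∏ i, x i ^ g i / (Nat.factorial (g i) : ENNReal) =
      ∏ i : Fin N, ∑' m : ℕ, x i ^ m / (Nat.factorial m : ENNReal) := by
  intro N
  induction N with
  | zero =>
    intro x
    rw [tsum_eq_single (fun _ => 0) (fun b hb => absurd (Subsingleton.elim b _) hb)]
    simp
  | succ N ih =>
    intro x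
    have he := (Fin.consEquiv (fun _ : Fin (N + 1) => ℕ)).tsum_eq
      (f := fun g : Fin (N + 1) → ℕ => ∏ i, x i ^ g i / (Nat.factorial (g i) : ENNReal))
    rw [← he, ENNReal.tsum_prod']
    have hterm : ∀ (m : ℕ) (g : Fin N → ℕ),
        (∏ i, x i ^ ((Fin.consEquiv (fun _ : Fin (N + 1) => ℕ)) (m, g)) i /
          (Nat.factorial (((Fin.consEquiv (fun _ : Fin (N + 1) => ℕ)) (m, g)) i) : ENNReal)) =
        (x 0 ^ m / (Nat.factorial m : ENNReal)) *
          ∏ i : Fin N, x i.succ ^ g i / (Nat.factorial (g i) : ENNReal) := by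
      intro m g
      simp only [Fin.prod_univ_succ, Fin.consEquiv_apply, Fin.cons_zero, Fin.cons_succ]
    simp_rw [hterm]
    rw [Fin.prod_univ_succ]
    simp_rw [ENNReal.tsum_mul_left, ENNReal.tsum_mul_right]
    rw [ih (fun i => x i.succ)]

/-- Finsupps with support in `range N` are equivalent to `Fin N → ℕ`. -/
noncomputable def eN (N : ℕ) : {f : ℕ →₀ ℕ // f.support ⊆ Finset.range N} ≃ (Fin N → ℕ) where
  toFun f i := f.1 i
  invFun g := ⟨Finsupp.onFinset (Finset.range N)
      (fun k => if h : k < N then g ⟨k, h⟩ else 0)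
      (by intro k hk; rw [Finset.mem_range]; by_contra h; simp [h] at hk),
    Finsupp.support_onFinset_subset⟩
  left_inv f := by
    apply Subtype.ext
    ext k
    simp only [Finsupp.onFinset_apply]
    split_ifs with h
    · rfl
    · symm
      by_contra hne
      have : k ∈ f.1.support := Finsupp.mem_support_iff.mpr hne
      exact h (Finset.mem_range.mp (f.2 this))
  right_inv g := by
    funext i
    simp [Finsupp.onFinset_apply, i.isLt]

lemma tsum_subtype_eq (y : ℕ → ENNReal) (N : ℕ) :
    ∑' f : {f : ℕ →₀ ℕ // f.support ⊆ Finset.range N}, G y f.1 =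
      ∏ i : Fin N, ∑' m : ℕ, y i ^ m / (Nat.factorial m : ENNReal) := by
  rw [← (eN N).symm.tsum_eq (f := fun f : {f : ℕ →₀ ℕ // f.support ⊆ Finset.range N} => G y f.1)]
  rw [← tsum_pi_fin N (fun i => y i)]
  refine tsum_congr fun g => ?_
  show G y ((eN N).symm g).1 = _
  unfold G
  have hval : ∀ k (h : k < N), ((eN N).symm g).1 k = g ⟨k, h⟩ := by
    intro k h
    simp [eN, Finsupp.onFinset_apply, h]
  rw [Finset.prod_subset ((eN N).symm g).2 (fun k _ hk => by
    rw [Finsupp.notMem_support_iff.mp hk]; simp)]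
  rw [← Fin.prod_univ_eq_prod_range (fun k => y k ^ ((eN N).symm g).1 k /
    (Nat.factorial (((eN N).symm g).1 k) : ENNReal)) N]
  refine Finset.prod_congr rfl fun i _ => ?_
  rw [hval i i.isLt]

lemma tsum_eq_iSup (y : ℕ → ENNReal) :
    ∑' f : ℕ →₀ ℕ, G y f =
      ⨆ N : ℕ, ∑' f : {f : ℕ →₀ ℕ // f.support ⊆ Finset.range N}, G y f.1 := by
  apply le_antisymm
  · rw [ENNReal.tsum_eq_iSup_sum]
    refine iSup_le fun s => ?_
    set N : ℕ := s.sup (fun f => f.support.sup id) + 1 with hN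
    have hsub : ∀ f ∈ s, f.support ⊆ Finset.range N := by
      intro f hf k hk
      rw [Finset.mem_range]
      calc k = id k := rfl
        _ ≤ f.support.sup id := Finset.le_sup hk
        _ ≤ s.sup (fun f => f.support.sup id) := Finset.le_sup (f := fun f => f.support.sup id) hf
        _ < N := Nat.lt_succ_self _
    refine le_trans ?_ (le_iSup _ N)
    show ∑ a ∈ s, G y a ≤ ∑' (x : ↑{f : ℕ →₀ ℕ | f.support ⊆ Finset.range N}), G y ↑x
    rw [tsum_subtype {f : ℕ →₀ ℕ | f.support ⊆ Finset.range N} (G y)]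
    calc ∑ f ∈ s, G y f
        = ∑ f ∈ s, Set.indicator {f : ℕ →₀ ℕ | f.support ⊆ Finset.range N} (G y) f := by
          refine Finset.sum_congr rfl fun f hf => ?_
          exact (Set.indicator_of_mem (a := f)
            (s := {g : ℕ →₀ ℕ | g.support ⊆ Finset.range N}) (hsub f hf) (G y)).symm
      _ ≤ _ := ENNReal.sum_le_tsum s
  · exact iSup_le fun N =>
      ENNReal.tsum_comp_le_tsum_of_injective Subtype.val_injective (G y)

lemma key (x : ℕ → ℝ) (hx0 : ∀ k, 0 ≤ x k) (hx : Summable x) :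
    ∑' f : ℕ →₀ ℕ, G (fun k => ENNReal.ofReal (x k)) f =
      ENNReal.ofReal (Real.exp (∑' k, x k)) := by
  rw [tsum_eq_iSup]
  have hF : ∀ N : ℕ,
      (∑' f : {f : ℕ →₀ ℕ // f.support ⊆ Finset.range N},
        G (fun k => ENNReal.ofReal (x k)) f.1) =
      ENNReal.ofReal (Real.exp (∑ k ∈ Finset.range N, x k)) := by
    intro N
    rw [tsum_subtype_eq]
    have : ∀ i : Fin N, (∑' m : ℕ, ENNReal.ofReal (x i) ^ m / (Nat.factorial m : ENNReal)) =
        ENNReal.ofReal (Real.exp (x i)) := fun i => exp_tsum (hx0 i)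
    simp_rw [this]
    rw [← ENNReal.ofReal_prod_of_nonneg (fun i _ => (Real.exp_pos _).le)]
    rw [Fin.prod_univ_eq_prod_range (fun k => Real.exp (x k)) N, ← Real.exp_sum]
  simp_rw [hF]
  have hmono : Monotone (fun N : ℕ => ENNReal.ofReal (Real.exp (∑ k ∈ Finset.range N, x k))) := by
    intro a b hab
    exact ENNReal.ofReal_le_ofReal (Real.exp_le_exp.mpr
      (Finset.sum_le_sum_of_subset_of_nonneg (Finset.range_subset_range.mpr hab)
        (fun k _ _ => hx0 k)))
  have htend : Tendsto (fun N : ℕ => ENNReal.ofReal (Real.exp (∑ k ∈ Finset.range N, x k)))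
      atTop (nhds (ENNReal.ofReal (Real.exp (∑' k, x k)))) := by
    exact (ENNReal.continuous_ofReal.tendsto _).comp
      ((Real.continuous_exp.tendsto _).comp hx.hasSum.tendsto_sum_nat)
  exact tendsto_nhds_unique (tendsto_atTop_iSup hmono) htend

end PartitionSumAux

/-- Summing `e^{A·E(n) + B·N(n)}/(n₁! n₂! ⋯)` over all finitely supported sequences
`n = (n_k)_{k≥1}` of nonnegative integers (encoded as `f : ℕ →₀ ℕ`, where `f k`
represents `n_{k+1}`), with `E(n) = Σ_k k·n_k` and `N(n) = Σ_k n_k`: if `e^A < 1`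
the family is summable and the sum equals `exp(e^{A+B}/(1 − e^A))`. -/
theorem partition_sum_identity (A B : ℝ) (hA : Real.exp A < 1) :
    Summable (fun f : ℕ →₀ ℕ =>
      Real.exp (A * (f.sum fun k m => ((k + 1) * m : ℝ)) + B * (f.sum fun _ m => (m : ℝ))) /
        ∏ k ∈ f.support, (Nat.factorial (f k) : ℝ)) ∧
    ∑' f : ℕ →₀ ℕ,
        Real.exp (A * (f.sum fun k m => ((k + 1) * m : ℝ)) + B * (f.sum fun _ m => (m : ℝ))) /
          ∏ k ∈ f.support, (Nat.factorial (f k) : ℝ)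
      = Real.exp (Real.exp (A + B) / (1 - Real.exp A)) := by
  classical
  set x : ℕ → ℝ := fun k => Real.exp (((k : ℝ) + 1) * A + B) with hxdef
  have hx0 : ∀ k, 0 ≤ x k := fun k => (Real.exp_pos _).le
  have hxgeom : ∀ k, x k = Real.exp (A + B) * Real.exp A ^ k := by
    intro k
    rw [hxdef, ← Real.exp_nat_mul, ← Real.exp_add]
    ring_nf
  have hx : Summable x := by
    simp_rw [funext hxgeom]
    exact (summable_geometric_of_lt_one (Real.exp_pos A).le hA).mul_left _
  have hxsum : ∑' k, x k = Real.exp (A + B) / (1 - Real.exp A) := by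
    simp_rw [funext hxgeom]
    rw [tsum_mul_left, tsum_geometric_of_lt_one (Real.exp_pos A).le hA, div_eq_mul_inv]
  -- the real term as a product
  set T : (ℕ →₀ ℕ) → ℝ := fun f =>
    Real.exp (A * (f.sum fun k m => ((k + 1) * m : ℝ)) + B * (f.sum fun _ m => (m : ℝ))) /
      ∏ k ∈ f.support, (Nat.factorial (f k) : ℝ) with hTdef
  have hTprod : ∀ f : ℕ →₀ ℕ, T f = ∏ k ∈ f.support, x k ^ f k / (Nat.factorial (f k) : ℝ) := by
    intro f
    simp only [hTdef]
    have hexp : A * (f.sum fun k m => ((k + 1) * m : ℝ)) + B * (f.sum fun _ m => (m : ℝ)) =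
        ∑ k ∈ f.support, (((k : ℝ) + 1) * A + B) * (f k : ℝ) := by
      rw [Finsupp.sum, Finsupp.sum, Finset.mul_sum, Finset.mul_sum, ← Finset.sum_add_distrib]
      exact Finset.sum_congr rfl fun k _ => by ring
    rw [hexp, Real.exp_sum, ← Finset.prod_div_distrib]
    refine Finset.prod_congr rfl fun k _ => ?_
    congr 1
    rw [mul_comm, Real.exp_nat_mul]
  have hT0 : ∀ f, 0 ≤ T f := by
    intro f
    rw [hTprod f]
    exact Finset.prod_nonneg fun k _ => by positivity
  have hGT : ∀ f : ℕ →₀ ℕ, PartitionSumAux.G (fun k => ENNReal.ofReal (x k)) f =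
      ENNReal.ofReal (T f) := by
    intro f
    rw [hTprod f, PartitionSumAux.G,
      ENNReal.ofReal_prod_of_nonneg (fun k _ => by positivity)]
    refine Finset.prod_congr rfl fun k _ => ?_
    rw [ENNReal.ofReal_div_of_pos (by positivity), ENNReal.ofReal_pow (hx0 k),
      ENNReal.ofReal_natCast]
  have hkey : ∑' f : ℕ →₀ ℕ, ENNReal.ofReal (T f) =
      ENNReal.ofReal (Real.exp (Real.exp (A + B) / (1 - Real.exp A))) := by
    rw [← hxsum]
    simp_rw [← hGT]
    exact PartitionSumAux.key x hx0 hx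
  have hne : (∑' f : ℕ →₀ ℕ, ENNReal.ofReal (T f)) ≠ ⊤ := by
    rw [hkey]; exact ENNReal.ofReal_ne_top
  have hsummable : Summable T := by
    have := ENNReal.summable_toReal hne
    simpa only [ENNReal.toReal_ofReal (hT0 _)] using this
  refine ⟨hsummable, ?_⟩
  have := ENNReal.ofReal_tsum_of_nonneg hT0 hsummable
  rw [← this] at hkey
  exact (ENNReal.ofReal_eq_ofReal_iff (tsum_nonneg hT0) (Real.exp_pos _).le).mp hkey
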